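/- arXiv:1309.1976 — 3 statements merged into one kernel-verified Lean document; each statement's English description precedes it below -/
import Mathlib

section
/- Let T ≥ 2 be an integer and let R₁, …, R_T be real numbers satisfying 0 < R_min ≤ R_t ≤ R_max for all t. Then 1 + Σ_{t=1}^{T-1} (R_t − R_{t+1})/R_t = T − Σ_{t=1}^{T-1} R_{t+1}/R_t, and this quantity is at most T − (T−1)·(R_min/R_max)^{1/(T-1)}. -/
lemma tele_prod (g : ℕ → ℝ) (n : ℕ) (h : ∀ i ≤ n, g i ≠ 0) :
    ∏ i ∈ Finset.range n, g (i + 1) / g i = g n / g 0 := by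
  induction n with
  | zero => simp [div_self (h 0 le_rfl)]
  | succ n ih =>
    rw [Finset.prod_range_succ, ih (fun i hi => h i (hi.trans (Nat.le_succ n)))]
    rw [div_mul_div_comm, mul_comm, mul_div_mul_right _ _ (h n (Nat.le_succ n))]

/-- Numerical core of Theorem 2: the time-sharing separation loss factor
`1 + Σ_{t=1}^{T-1} (R_t − R_{t+1})/R_t` equals `T − Σ_{t=1}^{T-1} R_{t+1}/R_t`
and is at most `T − (T−1)·(R_min/R_max)^{1/(T-1)}`. -/
theorem stmt_0 (T : ℕ) (hT : 2 ≤ T) (R : ℕ → ℝ) (Rmin Rmax : ℝ)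
    (hRmin : 0 < Rmin)
    (hbound : ∀ t ∈ Finset.Icc 1 T, Rmin ≤ R t ∧ R t ≤ Rmax) :
    (1 + ∑ t ∈ Finset.Icc 1 (T - 1), (R t - R (t + 1)) / R t
      = (T : ℝ) - ∑ t ∈ Finset.Icc 1 (T - 1), R (t + 1) / R t) ∧
    (1 + ∑ t ∈ Finset.Icc 1 (T - 1), (R t - R (t + 1)) / R t
      ≤ (T : ℝ) - ((T : ℝ) - 1) * (Rmin / Rmax) ^ ((1 : ℝ) / ((T : ℝ) - 1))) := by
  have hT1 : 1 ≤ T := by omega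
  have hpos : ∀ t ∈ Finset.Icc 1 T, 0 < R t := fun t ht =>
    lt_of_lt_of_le hRmin (hbound t ht).1
  have hmem : ∀ t ∈ Finset.Icc 1 (T - 1), t ∈ Finset.Icc 1 T ∧ t + 1 ∈ Finset.Icc 1 T := by
    intro t ht
    simp only [Finset.mem_Icc] at ht ⊢
    omega
  have h1T : (1 : ℕ) ∈ Finset.Icc 1 T := by simp [Finset.mem_Icc]; omega
  have hTT : T ∈ Finset.Icc 1 T := by simp [Finset.mem_Icc]; omega
  have hRmax : 0 < Rmax := hRmin.trans_le ((hbound 1 h1T).1.trans (hbound 1 h1T).2)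
  have hcard : (Finset.Icc 1 (T - 1)).card = T - 1 := by
    rw [Nat.card_Icc]; omega
  have hcardR : ((Finset.Icc 1 (T - 1)).card : ℝ) = (T : ℝ) - 1 := by
    rw [hcard, Nat.cast_sub hT1]; simp
  have hn : (0 : ℝ) < (T : ℝ) - 1 := by
    have : (2 : ℝ) ≤ T := by exact_mod_cast hT
    linarith
  have heq : ∀ t ∈ Finset.Icc 1 (T - 1), (R t - R (t + 1)) / R t = 1 - R (t + 1) / R t := by
    intro t ht
    have h1 := hpos t (hmem t ht).1
    field_simp
  have part1 : 1 + ∑ t ∈ Finset.Icc 1 (T - 1), (R t - R (t + 1)) / R t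
      = (T : ℝ) - ∑ t ∈ Finset.Icc 1 (T - 1), R (t + 1) / R t := by
    rw [Finset.sum_congr rfl heq, Finset.sum_sub_distrib, Finset.sum_const, nsmul_eq_mul,
      hcardR]
    ring
  refine ⟨part1, ?_⟩
  rw [part1]
  have key : ((T : ℝ) - 1) * (Rmin / Rmax) ^ ((1 : ℝ) / ((T : ℝ) - 1))
      ≤ ∑ t ∈ Finset.Icc 1 (T - 1), R (t + 1) / R t := by
    set z : ℕ → ℝ := fun t => R (t + 1) / R t with hzdef
    have hz : ∀ t ∈ Finset.Icc 1 (T - 1), 0 ≤ z t := fun t ht =>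
      le_of_lt (div_pos (hpos _ (hmem t ht).2) (hpos _ (hmem t ht).1))
    have hw : ∀ t ∈ Finset.Icc 1 (T - 1), (0:ℝ) ≤ ((T : ℝ) - 1)⁻¹ :=
      fun _ _ => le_of_lt (inv_pos.2 hn)
    have hwsum : ∑ _t ∈ Finset.Icc 1 (T - 1), ((T : ℝ) - 1)⁻¹ = 1 := by
      rw [Finset.sum_const, nsmul_eq_mul, hcardR, mul_inv_cancel₀ hn.ne']
    have amgm := Real.geom_mean_le_arith_mean_weighted (Finset.Icc 1 (T - 1))
      (fun _ => ((T : ℝ) - 1)⁻¹) z hw hwsum hz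
    have hprodz : ∏ t ∈ Finset.Icc 1 (T - 1), z t = R T / R 1 := by
      have h1 : Finset.Icc 1 (T - 1) = Finset.Ico 1 T := by
        rw [← Finset.Ico_add_one_right_eq_Icc]
        congr 1
        omega
      rw [h1, Finset.prod_Ico_eq_prod_range]
      have h2 : ∀ i ∈ Finset.range (T - 1), z (1 + i) =
          (fun i => R (i + 1)) (i + 1) / (fun i => R (i + 1)) i := by
        intro i _
        rw [Nat.add_comm 1 i]
      rw [Finset.prod_congr rfl h2, tele_prod (fun i => R (i + 1)) (T - 1)]
      · have hTs : T - 1 + 1 = T := by omega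
        simp [hTs]
      · intro i hi
        exact (hpos (i + 1) (by simp [Finset.mem_Icc]; omega)).ne'
    have hgeom : (∏ t ∈ Finset.Icc 1 (T - 1), z t ^ ((T : ℝ) - 1)⁻¹)
        = (R T / R 1) ^ ((T : ℝ) - 1)⁻¹ := by
      rw [Real.finset_prod_rpow _ _ hz, hprodz]
    have hbase : Rmin / Rmax ≤ R T / R 1 := by
      have hRT := (hbound T hTT).1
      have hR1 := (hbound 1 h1T).2
      have hR1pos := hpos 1 h1T
      exact div_le_div₀ (le_of_lt (hRmin.trans_le hRT)) hRT hR1pos hR1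
    have hmono : (Rmin / Rmax) ^ ((T : ℝ) - 1)⁻¹ ≤ (R T / R 1) ^ ((T : ℝ) - 1)⁻¹ :=
      Real.rpow_le_rpow (le_of_lt (div_pos hRmin hRmax)) hbase (le_of_lt (inv_pos.2 hn))
    have hsum : ∑ t ∈ Finset.Icc 1 (T - 1), ((T : ℝ) - 1)⁻¹ * z t
        = ((T : ℝ) - 1)⁻¹ * ∑ t ∈ Finset.Icc 1 (T - 1), z t := by
      rw [Finset.mul_sum]
    rw [hgeom, hsum] at amgm
    have : ((T : ℝ) - 1) * (Rmin / Rmax) ^ ((T : ℝ) - 1)⁻¹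
        ≤ ((T : ℝ) - 1) * (((T : ℝ) - 1)⁻¹ * ∑ t ∈ Finset.Icc 1 (T - 1), z t) := by
      exact mul_le_mul_of_nonneg_left (hmono.trans amgm) (le_of_lt hn)
    rw [← mul_assoc, mul_inv_cancel₀ hn.ne', one_mul] at this
    rwa [one_div]
  linarith
end

section
/- Let T ≥ 2 be an integer, let R₁ ≥ R₂ ≥ … ≥ R_T > 0 and let C₁, …, C_T be strictly positive real numbers. Let M = max_{t=1,…,T} (R_t/C_t). Then R_T/C_T + Σ_{t=1}^{T-1} (R_t − R_{t+1})/C_t ≤ M·(T − Σ_{t=1}^{T-1} R_{t+1}/R_t). -/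
/-- Numerical form of Theorem 3 (channel-oriented bound): with `R` positive and
nonincreasing, `C` positive, and `M = max_t R_t/C_t`, the separation scheme's
channel-use count is at most `M·(T − Σ_{t=1}^{T-1} R_{t+1}/R_t)`. -/
theorem stmt_6 (T : ℕ) (hT : 2 ≤ T) (R C : ℕ → ℝ) (M : ℝ)
    (hRpos : ∀ t ∈ Finset.Icc 1 T, 0 < R t)
    (hRmono : ∀ t ∈ Finset.Icc 1 (T - 1), R (t + 1) ≤ R t)
    (hCpos : ∀ t ∈ Finset.Icc 1 T, 0 < C t)
    (hM : M = (Finset.Icc 1 T).sup' (Finset.nonempty_Icc.mpr (by omega))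
      (fun t => R t / C t)) :
    R T / C T + ∑ t ∈ Finset.Icc 1 (T - 1), (R t - R (t + 1)) / C t
      ≤ M * ((T : ℝ) - ∑ t ∈ Finset.Icc 1 (T - 1), R (t + 1) / R t) := by
  have hMle : ∀ t ∈ Finset.Icc 1 T, R t / C t ≤ M := by
    intro t ht
    rw [hM]
    exact Finset.le_sup' (fun t => R t / C t) ht
  have h1 : R T / C T ≤ M := hMle T (by simp [Finset.mem_Icc]; omega)
  have h2 : ∀ t ∈ Finset.Icc 1 (T - 1),
      (R t - R (t + 1)) / C t ≤ M * (1 - R (t + 1) / R t) := by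
    intro t ht
    simp only [Finset.mem_Icc] at ht
    have htT : t ∈ Finset.Icc 1 T := by simp [Finset.mem_Icc]; omega
    have hRt : 0 < R t := hRpos t htT
    have hCt : 0 < C t := hCpos t htT
    have hfac : (0:ℝ) ≤ 1 - R (t + 1) / R t := by
      have h := hRmono t (by simp [Finset.mem_Icc]; omega)
      have : R (t + 1) / R t ≤ 1 := (div_le_one hRt).mpr h
      linarith
    have key : (R t - R (t + 1)) / C t = (R t / C t) * (1 - R (t + 1) / R t) := by
      field_simp
    rw [key]
    exact mul_le_mul_of_nonneg_right (hMle t htT) hfac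
  have hsum : ∑ t ∈ Finset.Icc 1 (T - 1), (R t - R (t + 1)) / C t
      ≤ ∑ t ∈ Finset.Icc 1 (T - 1), M * (1 - R (t + 1) / R t) :=
    Finset.sum_le_sum h2
  have hcard : (Finset.Icc 1 (T - 1)).card = T - 1 := by
    rw [Nat.card_Icc]; omega
  have hT1 : ((T - 1 : ℕ) : ℝ) = (T : ℝ) - 1 := by
    rw [Nat.cast_sub (by omega)]; simp
  have hrw : ∑ t ∈ Finset.Icc 1 (T - 1), M * (1 - R (t + 1) / R t)
      = M * (((T : ℝ) - 1) - ∑ t ∈ Finset.Icc 1 (T - 1), R (t + 1) / R t) := by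
    rw [← Finset.mul_sum, Finset.sum_sub_distrib, Finset.sum_const, hcard]
    rw [nsmul_eq_mul, mul_one, hT1]
  rw [hrw] at hsum
  have := add_le_add h1 hsum
  nlinarith [this]
end

section
/- Let T ≥ 1 be an integer, let P > 0, and let 0 < N_min ≤ N₁ ≤ N₂ ≤ … ≤ N_T ≤ N_max be real numbers. Then log₂(1 + (P/(P + N_T))·Σ_{t=1}^{T-1} (1 − N_t/N_{t+1})) ≤ log₂(1 + ln(N_max/N_min)). -/
/-- Numerical content of Corollary 2: with noise powers confined to
`[N_min, N_max]`, the separation gap in bits is at most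
`log₂(1 + ln(N_max/N_min))`. -/
theorem stmt_15 (T : ℕ) (hT : 1 ≤ T) (P : ℝ) (hP : 0 < P)
    (Nmin Nmax : ℝ) (N : ℕ → ℝ) (hNmin : 0 < Nmin)
    (hlb : Nmin ≤ N 1)
    (hmono : ∀ t ∈ Finset.Icc 1 (T - 1), N t ≤ N (t + 1))
    (hub : N T ≤ Nmax) :
    Real.logb 2 (1 + (P / (P + N T)) *
        ∑ t ∈ Finset.Icc 1 (T - 1), (1 - N t / N (t + 1)))
      ≤ Real.logb 2 (1 + Real.log (Nmax / Nmin)) := by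
  -- N t ≥ Nmin for 1 ≤ t ≤ T
  have hpos : ∀ t, 1 ≤ t → t ≤ T → Nmin ≤ N t := by
    intro t
    induction t with
    | zero => intro h; omega
    | succ k ih =>
      intro h1 h2
      rcases Nat.eq_or_lt_of_le h1 with h | h
      · simpa [← h] using hlb
      · have hk1 : 1 ≤ k := by omega
        have hkm : k ∈ Finset.Icc 1 (T - 1) := by
          simp only [Finset.mem_Icc]; omega
        exact le_trans (ih hk1 (by omega)) (hmono k hkm)
  have hNT : 0 < N T := lt_of_lt_of_le hNmin (hpos T hT le_rfl)
  set S := ∑ t ∈ Finset.Icc 1 (T - 1), (1 - N t / N (t + 1)) with hS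
  have hSnn : 0 ≤ S := by
    apply Finset.sum_nonneg
    intro t ht
    have h1 : 1 ≤ t := (Finset.mem_Icc.mp ht).1
    have h2 : t ≤ T - 1 := (Finset.mem_Icc.mp ht).2
    have hNt : 0 < N t := lt_of_lt_of_le hNmin (hpos t h1 (by omega))
    have hNt1 : 0 < N (t + 1) := lt_of_lt_of_le hNt (hmono t ht)
    have : N t / N (t + 1) ≤ 1 := (div_le_one hNt1).mpr (hmono t ht)
    linarith
  -- S ≤ log (N T) - log (N 1)
  have hSle : S ≤ Real.log (N T) - Real.log (N 1) := by
    have hterm : ∀ t ∈ Finset.Icc 1 (T - 1),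
        1 - N t / N (t + 1) ≤ Real.log (N (t + 1)) - Real.log (N t) := by
      intro t ht
      have h1 : 1 ≤ t := (Finset.mem_Icc.mp ht).1
      have h2 : t ≤ T - 1 := (Finset.mem_Icc.mp ht).2
      have hNt : 0 < N t := lt_of_lt_of_le hNmin (hpos t h1 (by omega))
      have hNt1 : 0 < N (t + 1) := lt_of_lt_of_le hNt (hmono t ht)
      have hx : 0 < N t / N (t + 1) := div_pos hNt hNt1
      have := Real.log_le_sub_one_of_pos hx
      rw [Real.log_div (ne_of_gt hNt) (ne_of_gt hNt1)] at this
      linarith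
    calc S ≤ ∑ t ∈ Finset.Icc 1 (T - 1),
          (Real.log (N (t + 1)) - Real.log (N t)) :=
        Finset.sum_le_sum hterm
      _ = Real.log (N T) - Real.log (N 1) := by
        have : Finset.Icc 1 (T - 1) = Finset.Ico 1 T := by
          ext x; simp only [Finset.mem_Icc, Finset.mem_Ico]; omega
        rw [this, Finset.sum_Ico_eq_sum_range]
        have := Finset.sum_range_sub (fun i => Real.log (N (1 + i))) (T - 1)
        simpa [Nat.add_sub_cancel' hT, add_comm, add_left_comm] using this
  have hlog : Real.log (N T) - Real.log (N 1) ≤ Real.log (Nmax / Nmin) := by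
    rw [Real.log_div (ne_of_gt (lt_of_lt_of_le hNT hub)) (ne_of_gt hNmin)]
    have h1 : Real.log (N T) ≤ Real.log Nmax := Real.log_le_log hNT hub
    have h2 : Real.log Nmin ≤ Real.log (N 1) := Real.log_le_log hNmin hlb
    linarith
  have hc : P / (P + N T) ≤ 1 := by
    rw [div_le_one (by linarith)]; linarith
  have hcnn : 0 ≤ P / (P + N T) := by positivity
  have hmain : P / (P + N T) * S ≤ Real.log (Nmax / Nmin) := by
    calc P / (P + N T) * S ≤ 1 * S := mul_le_mul_of_nonneg_right hc hSnn
      _ = S := one_mul S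
      _ ≤ _ := le_trans hSle hlog
  exact Real.logb_le_logb_of_le (by norm_num)
    (by have : 0 ≤ P / (P + N T) * S := mul_nonneg hcnn hSnn; linarith)
    (by linarith)
end
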